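/- Let A be a group, viewed as a constant sheaf of groups on a topological space C which is simply connected and locally path-connected. Then every Čech 1-cocycle of the constant sheaf A on any open cover of C is a Čech coboundary; that is, the first Čech cohomology set H^1(C, A) is trivial. -/

import Mathlib

set_option linter.unusedSectionVars false
set_option maxHeartbeats 1000000

open Set

namespace CechAux

attribute [local instance] Path.Homotopic.setoid

variable {C : Type*} [TopologicalSpace C] {A : Type*} [Group A] {I : Type*}

/-- A chain for `f` from `a` to `b`: a list of (index, right endpoint) pairs, each segment
mapping into the corresponding member of the cover. -/
def Adapted (U : I → Set C) (f : ℝ → C) : ℝ → ℝ → List (I × ℝ) → Prop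
  | a, b, [] => a = b
  | a, b, (k, r) :: l => a ≤ r ∧ (∀ t ∈ Set.Icc a r, f t ∈ U k) ∧ Adapted U f r b l

/-- The monodromy value of a chain, with left boundary index `i` and right boundary index `j`. -/
def chainVal (ψ : I → I → C → A) (f : ℝ → C) : I → ℝ → List (I × ℝ) → I → A
  | i, a, [], j => ψ i j (f a)
  | i, a, (k, r) :: l, j => ψ i k (f a) * chainVal ψ f k r l j

variable {U : I → Set C} {ψ : I → I → C → A}

theorem psi_self (hcoc : ∀ i j k, ∀ x ∈ U i ∩ U j ∩ U k, ψ i k x = ψ i j x * ψ j k x)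
    {i : I} {x : C} (hx : x ∈ U i) : ψ i i x = 1 := by
  have := hcoc i i i x ⟨⟨hx, hx⟩, hx⟩
  exact left_eq_mul.mp this

theorem psi_mul (hcoc : ∀ i j k, ∀ x ∈ U i ∩ U j ∩ U k, ψ i k x = ψ i j x * ψ j k x)
    {i j k : I} {x : C} (hi : x ∈ U i) (hj : x ∈ U j) (hk : x ∈ U k) :
    ψ i j x * ψ j k x = ψ i k x := (hcoc i j k x ⟨⟨hi, hj⟩, hk⟩).symm

/-- `ψ p q` is constant along a path inside `U p ∩ U q`. -/
theorem psi_const (hlc : ∀ i j, IsLocallyConstant ((U i ∩ U j).restrict (ψ i j)))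
    {p q : I} {g : ℝ → C} (hg : Continuous g) {s t : ℝ} (hst : s ≤ t)
    (hmem : ∀ u ∈ Icc s t, g u ∈ U p ∩ U q) : ψ p q (g s) = ψ p q (g t) := by
  haveI : PreconnectedSpace (Icc s t) := Subtype.preconnectedSpace isPreconnected_Icc
  have hG : Continuous (fun u : Icc s t => (⟨g u, hmem u u.2⟩ : ↥(U p ∩ U q))) :=
    Continuous.subtype_mk (hg.comp continuous_subtype_val) _
  have hFG : IsLocallyConstant
      (fun u : Icc s t => ((U p ∩ U q).restrict (ψ p q)) ⟨g u, hmem u u.2⟩) :=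
    (hlc p q).comp_continuous hG
  exact hFG.apply_eq_of_preconnectedSpace ⟨s, left_mem_Icc.2 hst⟩ ⟨t, right_mem_Icc.2 hst⟩

theorem Adapted.le {f : ℝ → C} : ∀ {l : List (I × ℝ)} {a b : ℝ}, Adapted U f a b l → a ≤ b
  | [], _, _, h => le_of_eq h
  | (_, _) :: _, _, _, h => h.1.trans h.2.2.le

/-- Changing the right boundary index. -/
theorem chainVal_right_change
    (hcoc : ∀ i j k, ∀ x ∈ U i ∩ U j ∩ U k, ψ i k x = ψ i j x * ψ j k x)
    {f : ℝ → C} {b : ℝ} {j j' : I} (hbj : f b ∈ U j) (hbj' : f b ∈ U j') :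
    ∀ {l : List (I × ℝ)} {a : ℝ} {i : I}, Adapted U f a b l → f a ∈ U i →
      chainVal ψ f i a l j' = chainVal ψ f i a l j * ψ j j' (f b)
  | [], a, i, had, hai => by
    have hab : a = b := had
    subst hab
    exact hcoc i j j' (f a) ⟨⟨hai, hbj⟩, hbj'⟩
  | (k, r) :: l, a, i, had, hai => by
    have := chainVal_right_change hcoc hbj hbj' had.2.2
      (had.2.1 r ⟨had.1, le_refl r⟩)
    simp only [chainVal, this, mul_assoc]

/-- Appending a final segment. -/
theorem chainVal_append_single {f : ℝ → C} {k j : I} {b : ℝ} :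
    ∀ (l : List (I × ℝ)) (i : I) (a : ℝ),
      chainVal ψ f i a (l ++ [(k, b)]) j = chainVal ψ f i a l k * ψ k j (f b)
  | [], i, a => by simp [chainVal]
  | (m, r) :: l, i, a => by
    simp only [List.cons_append, chainVal, List.append_eq]
    rw [chainVal_append_single l m r, mul_assoc]

theorem Adapted.append_single {f : ℝ → C} {k : I} {m b : ℝ} :
    ∀ {l : List (I × ℝ)} {a : ℝ}, Adapted U f a m l → m ≤ b →
      (∀ t ∈ Icc m b, f t ∈ U k) → Adapted U f a b (l ++ [(k, b)])
  | [], a, had, hmb, hseg => by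
    have : a = m := had
    subst this
    exact ⟨hmb, hseg, rfl⟩
  | (p, r) :: l, a, had, hmb, hseg => ⟨had.1, had.2.1, had.2.2.append_single hmb hseg⟩


variable {U : I → Set C} {ψ : I → I → C → A}

/-- Well-definedness: any two chains for the same path give the same monodromy value. -/
theorem chainVal_welldef (hlc : ∀ i j, IsLocallyConstant ((U i ∩ U j).restrict (ψ i j)))
    (hcoc : ∀ i j k, ∀ x ∈ U i ∩ U j ∩ U k, ψ i k x = ψ i j x * ψ j k x)
    {f : ℝ → C} (hf : Continuous f) {b : ℝ} {j : I} (hbj : f b ∈ U j) :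
    ∀ (N : ℕ) (l l' : List (I × ℝ)) {a : ℝ} {i : I}, l.length + l'.length ≤ N →
      f a ∈ U i → Adapted U f a b l → Adapted U f a b l' →
      chainVal ψ f i a l j = chainVal ψ f i a l' j := by
  intro N
  induction N with
  | zero =>
    intro l l' a i hlen _ _ _
    have h1 : l = [] := List.length_eq_zero_iff.mp (by omega)
    have h2 : l' = [] := List.length_eq_zero_iff.mp (by omega)
    subst h1; subst h2; rfl
  | succ N ih =>
    rintro (_ | ⟨⟨k, r⟩, t⟩) (_ | ⟨⟨k', r'⟩, t'⟩) a i hlen hai had had'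
    · rfl
    · -- l = [], l' = (k',r')::t'
      have hab : a = b := had
      subst hab
      have h1 : a ≤ r' := had'.1
      have h2 : r' ≤ a := had'.2.2.le
      have hra : r' = a := le_antisymm h2 h1
      subst hra
      have hak' : f r' ∈ U k' := had'.2.1 r' ⟨le_refl _, le_refl _⟩
      have := ih [] t' (by simp only [List.length_cons, List.length_nil] at hlen ⊢; omega) hak'
        (rfl) had'.2.2
      simp only [chainVal] at this ⊢
      rw [← this]
      exact (psi_mul hcoc hai hak' hbj).symm
    · -- l = (k,r)::t, l' = []
      have hab : a = b := had'
      subst hab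
      have h1 : a ≤ r := had.1
      have h2 : r ≤ a := had.2.2.le
      have hra : r = a := le_antisymm h2 h1
      subst hra
      have hak : f r ∈ U k := had.2.1 r ⟨le_refl _, le_refl _⟩
      have := ih t [] (by simp only [List.length_cons, List.length_nil] at hlen ⊢; omega) hak had.2.2 rfl
      simp only [chainVal] at this ⊢
      rw [this]
      exact psi_mul hcoc hai hak hbj
    · -- cons cons
      simp only [List.length_cons] at hlen
      by_cases hrr : r ≤ r'
      · have hsub : ∀ u ∈ Icc a r, f u ∈ U k ∩ U k' := fun u hu =>
          ⟨had.2.1 u hu, had'.2.1 u ⟨hu.1, hu.2.trans hrr⟩⟩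
        have hfr : f r ∈ U k := had.2.1 r ⟨had.1, le_refl _⟩
        have had'' : Adapted U f r b ((k', r') :: t') :=
          ⟨hrr, fun u hu => had'.2.1 u ⟨had.1.trans hu.1, hu.2⟩, had'.2.2⟩
        have hrec := ih t ((k', r') :: t') (by simp only [List.length_cons]; omega) hfr had.2.2 had''
        simp only [chainVal] at hrec ⊢
        rw [hrec]
        have hconst : ψ k k' (f a) = ψ k k' (f r) :=
          psi_const hlc hf had.1 hsub
        rw [← mul_assoc, ← hconst,
          psi_mul hcoc hai (hsub a ⟨le_refl _, had.1⟩).1 (hsub a ⟨le_refl _, had.1⟩).2]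
      · have hrr' : r' ≤ r := le_of_not_ge hrr
        have hsub : ∀ u ∈ Icc a r', f u ∈ U k' ∩ U k := fun u hu =>
          ⟨had'.2.1 u hu, had.2.1 u ⟨hu.1, hu.2.trans hrr'⟩⟩
        have hfr' : f r' ∈ U k' := had'.2.1 r' ⟨had'.1, le_refl _⟩
        have had'' : Adapted U f r' b ((k, r) :: t) :=
          ⟨hrr', fun u hu => had.2.1 u ⟨had'.1.trans hu.1, hu.2⟩, had.2.2⟩
        have hrec := ih ((k, r) :: t) t' (by simp only [List.length_cons]; omega) hfr' had'' had'.2.2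
        simp only [chainVal] at hrec ⊢
        rw [← hrec]
        have hconst : ψ k' k (f a) = ψ k' k (f r') :=
          psi_const hlc hf had'.1 hsub
        rw [← mul_assoc, ← hconst,
          psi_mul hcoc hai (hsub a ⟨le_refl _, had'.1⟩).1 (hsub a ⟨le_refl _, had'.1⟩).2]

/-- Values along two horizontal lines of a strip agree for a chain adapted to the whole strip. -/
theorem chainVal_strip (hlc : ∀ i j, IsLocallyConstant ((U i ∩ U j).restrict (ψ i j)))
    {K : ℝ → ℝ → C} (hK : Continuous fun p : ℝ × ℝ => K p.1 p.2)
    {s s' : ℝ} (hss : s ≤ s') {b : ℝ} {j : I}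
    (h1 : ∀ u ∈ Icc s s', K u b ∈ U j) :
    ∀ (l : List (I × ℝ)) {a : ℝ} {i : I}, (∀ u ∈ Icc s s', K u a ∈ U i) →
      (∀ u ∈ Icc s s', Adapted U (K u) a b l) →
      chainVal ψ (K s) i a l j = chainVal ψ (K s') i a l j := by
  intro l
  induction l with
  | nil =>
    intro a i h0 had
    have hab : a = b := had s (left_mem_Icc.2 hss)
    subst hab
    simp only [chainVal]
    exact psi_const hlc (hK.comp (continuous_id.prodMk continuous_const)) hss
      (fun u hu => ⟨h0 u hu, h1 u hu⟩)
  | cons p l ihl =>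
    obtain ⟨k, r⟩ := p
    intro a i h0 had
    have hseg := fun u hu => (had u hu).2.1
    have har : a ≤ r := (had s (left_mem_Icc.2 hss)).1
    simp only [chainVal]
    have hfirst : ψ i k (K s a) = ψ i k (K s' a) :=
      psi_const hlc (hK.comp (continuous_id.prodMk continuous_const)) hss
        (fun u hu => ⟨h0 u hu, hseg u hu a ⟨le_refl _, har⟩⟩)
    rw [hfirst, ihl (fun u hu => hseg u hu r ⟨har, le_refl _⟩) (fun u hu => (had u hu).2.2)]

/-- The uniform chain with `n` segments. -/
noncomputable def unifChain (n : ℕ) (ι : ℕ → I) : List (I × ℝ) :=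
  (List.range n).map fun k => (ι k, (k + 1 : ℝ) / n)

theorem unif_adapted {f : ℝ → C} {n : ℕ} (hn : 0 < n) {ι : ℕ → I}
    (h : ∀ k < n, ∀ t ∈ Icc ((k : ℝ) / n) ((k + 1 : ℝ) / n), f t ∈ U (ι k)) :
    Adapted U f 0 1 (unifChain n ι) := by
  have hnR : (0 : ℝ) < n := Nat.cast_pos.mpr hn
  have main : ∀ d j, j + d = n →
      Adapted U f ((j : ℝ) / n) 1 ((List.range' j d).map fun k => (ι k, (k + 1 : ℝ) / n)) := by
    intro d
    induction d with
    | zero =>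
      intro j hj
      have hjn : j = n := by omega
      rw [List.range'_zero, List.map_nil]
      show ((j : ℝ) / n) = 1
      rw [hjn]
      exact div_self (ne_of_gt hnR)
    | succ d ihd =>
      intro j hj
      rw [List.range'_succ, List.map_cons]
      refine ⟨?_, ?_, ?_⟩
      · have hj1 : ((j : ℝ)) ≤ ((j : ℝ) + 1) := by linarith
        calc ((j : ℝ)) / n ≤ ((j : ℝ) + 1) / n := by gcongr
          _ = _ := by norm_num
      · intro t ht
        exact h j (by omega) t ht
      · have := ihd (j + 1) (by omega)
        push_cast at this ⊢
        exact this
  have h0 := main n 0 (by omega)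
  simpa only [unifChain, List.range_eq_range', Nat.cast_zero, zero_div] using h0

/-- Existence of an adapted chain for a continuous function covering `[0,1]`. -/
theorem exists_adapted (hUo : ∀ i, IsOpen (U i)) {f : ℝ → C} (hf : Continuous f)
    (hcov : ∀ x : C, ∃ i, x ∈ U i) (i₀ : I) : ∃ l, Adapted U f 0 1 l := by
  obtain ⟨δ, hδ, hball⟩ := lebesgue_number_lemma_of_metric (isCompact_Icc (a := (0:ℝ)) (b := 1))
    (fun i => (hUo i).preimage hf) (fun t _ => mem_iUnion.2 (hcov (f t)))
  obtain ⟨n, hn⟩ := exists_nat_one_div_lt hδ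
  set N := n + 1 with hN
  have hNpos : (0 : ℝ) < N := by positivity
  have key : ∀ k, k < N → ∃ i, ∀ t ∈ Icc ((k : ℝ) / N) ((k + 1 : ℝ) / N), f t ∈ U i := by
    intro k hk
    have hmem : ((k : ℝ) / N) ∈ Icc (0 : ℝ) 1 := by
      constructor
      · positivity
      · rw [div_le_one hNpos]; exact_mod_cast Nat.le_of_lt hk
    obtain ⟨i, hi⟩ := hball _ hmem
    refine ⟨i, fun t ht => hi ?_⟩
    rw [Metric.mem_ball, Real.dist_eq, abs_sub_lt_iff]
    have h1 : (k + 1 : ℝ) / N - (k : ℝ) / N = 1 / N := by field_simp; ring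
    constructor
    · calc t - (k:ℝ)/N ≤ (k+1:ℝ)/N - (k:ℝ)/N := by linarith [ht.2]
        _ = 1/N := h1
        _ < δ := by exact_mod_cast hn
    · have : (k:ℝ)/N - t ≤ 0 := by linarith [ht.1]
      linarith
  set ι : ℕ → I := fun k => if h : k < N then (key k h).choose else i₀ with hιdef
  have hι : ∀ k < N, ∀ t ∈ Icc ((k : ℝ) / N) ((k + 1 : ℝ) / N), f t ∈ U (ι k) := by
    intro k hk
    simp only [hιdef, dif_pos hk]
    exact (key k hk).choose_spec
  exact ⟨unifChain N ι, unif_adapted (by omega) hι⟩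

/-- Homotopy invariance of the chain monodromy. -/
theorem chainVal_homotopic (hUo : ∀ i, IsOpen (U i)) (hUcov : ∀ x : C, ∃ i, x ∈ U i)
    (hlc : ∀ i j, IsLocallyConstant ((U i ∩ U j).restrict (ψ i j)))
    (hcoc : ∀ i j k, ∀ x ∈ U i ∩ U j ∩ U k, ψ i k x = ψ i j x * ψ j k x)
    {x y : C} {γ γ' : Path x y} (h : Path.Homotopy γ γ') {i j : I}
    (hx : x ∈ U i) (hy : y ∈ U j) {c c' : List (I × ℝ)}
    (hc : Adapted U γ.extend 0 1 c) (hc' : Adapted U γ'.extend 0 1 c') :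
    chainVal ψ γ.extend i 0 c j = chainVal ψ γ'.extend i 0 c' j := by
  have p0 : projIcc (0:ℝ) 1 zero_le_one (0:ℝ) = (0 : unitInterval) := by
    ext; simp
  have p1 : projIcc (0:ℝ) 1 zero_le_one (1:ℝ) = (1 : unitInterval) := by
    ext; simp
  set K : ℝ → ℝ → C := fun u r =>
    h (projIcc 0 1 zero_le_one u, projIcc 0 1 zero_le_one r) with hKdef
  have hKc : Continuous fun p : ℝ × ℝ => K p.1 p.2 :=
    h.continuous.comp ((continuous_projIcc.comp continuous_fst).prodMk
      (continuous_projIcc.comp continuous_snd))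
  have hK0 : K 0 = γ.extend := by
    funext r
    show h (projIcc 0 1 zero_le_one 0, projIcc 0 1 zero_le_one r) = _
    rw [p0]
    exact h.apply_zero _
  have hK1 : K 1 = γ'.extend := by
    funext r
    show h (projIcc 0 1 zero_le_one 1, projIcc 0 1 zero_le_one r) = _
    rw [p1]
    exact h.apply_one _
  have hKu0 : ∀ u, K u 0 = x := fun u => by
    show h (_, projIcc 0 1 zero_le_one 0) = _
    rw [p0]
    exact h.source _
  have hKu1 : ∀ u, K u 1 = y := fun u => by
    show h (_, projIcc 0 1 zero_le_one 1) = _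
    rw [p1]
    exact h.target _
  -- Lebesgue number for the square
  obtain ⟨δ, hδ, hball⟩ := lebesgue_number_lemma_of_metric
    ((isCompact_Icc (a := (0:ℝ)) (b := 1)).prod (isCompact_Icc (a := (0:ℝ)) (b := 1)))
    (fun i => (hUo i).preimage hKc)
    (fun p _ => mem_iUnion.2 (hUcov (K p.1 p.2)))
  obtain ⟨n, hn⟩ := exists_nat_one_div_lt hδ
  set N := n + 1 with hNdef
  have hNpos : (0:ℝ) < N := by positivity
  have hNn : ((N : ℕ) : ℝ) = (n : ℝ) + 1 := by push_cast [hNdef]; ring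
  have key : ∀ m k : ℕ, m < N → k < N → ∃ i₁,
      ∀ u ∈ Icc ((m:ℝ)/N) (((m:ℝ)+1)/N), ∀ r ∈ Icc ((k:ℝ)/N) (((k:ℝ)+1)/N),
        K u r ∈ U i₁ := by
    intro m k hm hk
    have hmem : ((m:ℝ)/N, (k:ℝ)/N) ∈ (Icc (0:ℝ) 1) ×ˢ (Icc (0:ℝ) 1) := by
      constructor <;> constructor
      · positivity
      · rw [div_le_one hNpos]; exact_mod_cast Nat.le_of_lt hm
      · positivity
      · rw [div_le_one hNpos]; exact_mod_cast Nat.le_of_lt hk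
    obtain ⟨i₁, hi₁⟩ := hball _ hmem
    refine ⟨i₁, fun u hu r hr => hi₁ (?_ : (u, r) ∈ Metric.ball _ _)⟩
    rw [Metric.mem_ball, Prod.dist_eq]
    have hstep : ((m:ℝ)+1)/N - (m:ℝ)/N = 1/N := by field_simp; ring
    have hstep' : ((k:ℝ)+1)/N - (k:ℝ)/N = 1/N := by field_simp; ring
    have h1N : (1:ℝ)/N < δ := by rw [hNn]; exact hn
    apply max_lt
    · rw [Real.dist_eq, abs_sub_lt_iff]
      constructor <;> [skip; skip] <;> [linarith [hu.1, hu.2]; linarith [hu.1, hu.2]]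
    · rw [Real.dist_eq, abs_sub_lt_iff]
      constructor <;> [skip; skip] <;> [linarith [hr.1, hr.2]; linarith [hr.1, hr.2]]
  set ι : ℕ → ℕ → I := fun m k => if hmk : m < N ∧ k < N then (key m k hmk.1 hmk.2).choose else i
    with hιdef
  set l : ℕ → List (I × ℝ) := fun m => unifChain N (ι m) with hldef
  have hstrip : ∀ m : ℕ, m < N → ∀ u ∈ Icc ((m:ℝ)/N) (((m:ℝ)+1)/N),
      Adapted U (K u) 0 1 (l m) := by
    intro m hm u hu
    apply unif_adapted (by omega)
    intro k hk t ht
    have := (key m k hm hk).choose_spec u hu t (by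
      constructor
      · exact ht.1
      · have : ((k:ℝ)+1)/N = ((k:ℝ)+1)/N := rfl
        linarith [ht.2])
    simpa only [hιdef, dif_pos (And.intro hm hk)] using this
  have hγcont : Continuous γ.extend := γ.continuous_extend
  have hγ'cont : Continuous γ'.extend := γ'.continuous_extend
  have hx0 : γ.extend 0 ∈ U i := by rw [Path.extend_zero]; exact hx
  have hy1 : γ.extend 1 ∈ U j := by rw [Path.extend_one]; exact hy
  have hx0' : γ'.extend 0 ∈ U i := by rw [Path.extend_zero]; exact hx
  have hy1' : γ'.extend 1 ∈ U j := by rw [Path.extend_one]; exact hy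
  -- row induction
  have row : ∀ m : ℕ, m ≤ N → chainVal ψ (K ((m:ℝ)/N)) i 0 (l (min m n)) j
      = chainVal ψ γ.extend i 0 c j := by
    intro m
    induction m with
    | zero =>
      intro _
      have h00 : ((0:ℕ):ℝ)/N = 0 := by norm_num
      rw [h00, Nat.zero_min, hK0]
      apply chainVal_welldef hlc hcoc hγcont hy1 ((l 0).length + c.length) _ _ le_rfl hx0 _ hc
      have := hstrip 0 (by omega) 0 ⟨by norm_num, by positivity⟩
      rwa [hK0] at this
    | succ m ihm =>
      intro hm1
      have hmN : m < N := by omega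
      have hminm : min m n = m := min_eq_left (by omega)
      have hss : (m:ℝ)/N ≤ ((m:ℝ)+1)/N := by gcongr; linarith
      have hstripEq : chainVal ψ (K ((m:ℝ)/N)) i 0 (l m) j
          = chainVal ψ (K (((m:ℝ)+1)/N)) i 0 (l m) j := by
        apply chainVal_strip hlc hKc hss
          (fun u _ => by rw [hKu1]; exact hy)
          (l m) (fun u _ => by rw [hKu0]; exact hx)
          (fun u hu => hstrip m hmN u hu)
      have hprev := ihm (by omega)
      rw [hminm] at hprev
      have hcast : ((m+1:ℕ):ℝ) = (m:ℝ)+1 := by push_cast; ring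
      rw [hcast]
      have hKcont' : Continuous fun r => K (((m:ℝ)+1)/N) r :=
        hKc.comp (continuous_const.prodMk continuous_id)
      have hmemr : ((m:ℝ)+1)/N ∈ Icc ((m:ℝ)/N) (((m:ℝ)+1)/N) := ⟨hss, le_refl _⟩
      by_cases hm1n : m + 1 ≤ n
      · have hminm1 : min (m+1) n = m+1 := min_eq_left hm1n
        rw [hminm1]
        have hadlm : Adapted U (K (((m:ℝ)+1)/N)) 0 1 (l m) := hstrip m hmN _ hmemr
        have hadlm1 : Adapted U (K (((m:ℝ)+1)/N)) 0 1 (l (m+1)) := by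
          have := hstrip (m+1) (by omega) (((m:ℝ)+1)/N) (by
            rw [hcast]
            constructor
            · exact le_refl _
            · gcongr
              linarith)
          exact this
        have hswap := chainVal_welldef hlc hcoc hKcont'
          (by rw [hKu1]; exact hy) ((l (m+1)).length + (l m).length) (l (m+1)) (l m)
          le_rfl (by rw [hKu0]; exact hx) hadlm1 hadlm
        rw [hswap, ← hstripEq, hprev]
      · have hmeq : m = n := by omega
        have hminm1 : min (m+1) n = m := by omega
        rw [hminm1, ← hstripEq, hprev]
  -- conclude
  have hrowN := row N le_rfl
  have hNN : ((N:ℕ):ℝ)/N = 1 := div_self (ne_of_gt hNpos)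
  rw [hNN, hK1] at hrowN
  have hminN : min N n = n := by omega
  rw [hminN] at hrowN
  have hadln : Adapted U γ'.extend 0 1 (l n) := by
    have := hstrip n (by omega) 1 (by
      constructor
      · rw [div_le_one hNpos, hNn]; linarith
      · rw [hNn]; exact le_of_eq (div_self (by positivity)).symm)
    rwa [hK1] at this
  rw [← hrowN]
  exact (chainVal_welldef hlc hcoc hγ'cont hy1' ((l n).length + c'.length) _ _ le_rfl
    hx0' hadln hc')

theorem Adapted.half {f g : ℝ → C} (hfg : ∀ t ∈ Icc (0:ℝ) 1, g (t/2) = f t) :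
    ∀ {l : List (I × ℝ)} {a b : ℝ}, Adapted U f a b l → 0 ≤ a → b ≤ 1 →
      Adapted U g (a/2) (b/2) (l.map fun p => (p.1, p.2/2))
  | [], a, b, had, _, _ => by
    have : a = b := had
    subst this; rfl
  | (k, r) :: l, a, b, had, ha, hb => by
    have hrb : r ≤ b := had.2.2.le
    refine ⟨by linarith [had.1], ?_, Adapted.half hfg had.2.2 (by linarith [had.1]) hb⟩
    intro t ht
    have h2t : 2 * t ∈ Icc a r := ⟨by linarith [ht.1], by linarith [ht.2]⟩
    have h2t' : 2 * t ∈ Icc (0:ℝ) 1 := ⟨by linarith [h2t.1], by linarith [h2t.2]⟩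
    have := hfg (2 * t) h2t'
    rw [show (2 * t) / 2 = t by ring] at this
    rw [this]
    exact had.2.1 _ h2t

theorem chainVal_half {f g : ℝ → C} (hfg : ∀ t ∈ Icc (0:ℝ) 1, g (t/2) = f t) {j : I} :
    ∀ (l : List (I × ℝ)) {a b : ℝ} (i : I), Adapted U f a b l → 0 ≤ a → b ≤ 1 →
      chainVal ψ g i (a/2) (l.map fun p => (p.1, p.2/2)) j = chainVal ψ f i a l j
  | [], a, b, i, had, ha, hb => by
    have hab : a = b := had
    simp only [List.map_nil, chainVal]
    rw [hfg a ⟨ha, hab ▸ hb⟩]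
  | (k, r) :: l, a, b, i, had, ha, hb => by
    have hrb : r ≤ b := had.2.2.le
    simp only [List.map_cons, chainVal]
    rw [hfg a ⟨ha, by linarith [had.1]⟩,
      chainVal_half hfg l k had.2.2 (by linarith [had.1]) hb]

theorem trans_extend_half {x y z : C} (γ : Path x y) (σ : Path y z) :
    ∀ t ∈ Icc (0:ℝ) 1, (γ.trans σ).extend (t/2) = γ.extend t := by
  intro t ht
  have h2 : t/2 ∈ Icc (0:ℝ) 1 := ⟨by linarith [ht.1], by linarith [ht.2]⟩
  rw [Path.extend_apply _ h2, Path.trans_apply]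
  split_ifs with hc
  · rw [← Path.extend_apply]
    congr 1
    show 2 * (t/2) = t
    ring
  · exact absurd (show (t/2 : ℝ) ≤ 1/2 by linarith [ht.2]) hc

theorem trans_extend_second {x y z : C} (γ : Path x y) (σ : Path y z) :
    ∀ t ∈ Icc ((1:ℝ)/2) 1, (γ.trans σ).extend t = σ.extend (2*t - 1) := by
  intro t ht
  have hmem : t ∈ Icc (0:ℝ) 1 := ⟨by linarith [ht.1], ht.2⟩
  rw [Path.extend_apply _ hmem, Path.trans_apply]
  split_ifs with hc
  · have ht2 : t = 1/2 := le_antisymm hc ht.1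
    subst ht2
    rw [← Path.extend_apply]
    norm_num [Path.extend_one, Path.extend_zero]
  · rw [← Path.extend_apply]

end CechAux

/-- Let `A` be a group, viewed as a constant sheaf on a simply connected and
locally path-connected topological space `C`.  Then every Čech 1-cocycle of the constant sheaf
`A` on any open cover `(U i)` of `C` is a coboundary: there are locally constant
`ω i : U i → A` with `ψ i j = (ω i)⁻¹ · (ω j)` on `U i ∩ U j`; that is, `H¹(C, A)` is trivial. -/
theorem cech_H1_of_constant_sheaf_trivial
    {C : Type*} [TopologicalSpace C] [SimplyConnectedSpace C] [LocallyPathConnectedSpace C]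
    {A : Type*} [Group A] {I : Type*}
    (U : I → Set C)
    (hUo : ∀ i, IsOpen (U i))
    (hUcov : ∀ x : C, ∃ i, x ∈ U i)
    (ψ : I → I → C → A)
    (hlc : ∀ i j, IsLocallyConstant ((U i ∩ U j).restrict (ψ i j)))
    (hcoc : ∀ i j k, ∀ x ∈ U i ∩ U j ∩ U k, ψ i k x = ψ i j x * ψ j k x) :
    ∃ ω : I → C → A,
      (∀ i, IsLocallyConstant ((U i).restrict (ω i))) ∧
      ∀ i j, ∀ x ∈ U i ∩ U j, ψ i j x = (ω i x)⁻¹ * ω j x := by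
  classical
  open CechAux in
  have hPC : PathConnectedSpace C := inferInstance
  obtain ⟨x₀⟩ : Nonempty C := hPC.nonempty
  obtain ⟨i₀, hi₀⟩ := hUcov x₀
  set Γ : ∀ x : C, Path x₀ x := fun x => PathConnectedSpace.somePath x₀ x with hΓ
  have hchain : ∀ x : C, ∃ l, CechAux.Adapted U (Γ x).extend 0 1 l := fun x =>
    CechAux.exists_adapted hUo (Γ x).continuous_extend hUcov i₀
  set c : C → List (I × ℝ) := fun x => (hchain x).choose with hcdef
  have hcx : ∀ x, CechAux.Adapted U (Γ x).extend 0 1 (c x) := fun x => (hchain x).choose_spec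
  set ω : I → C → A := fun i x =>
    if _ : x ∈ U i then CechAux.chainVal ψ (Γ x).extend i₀ 0 (c x) i else 1 with hωdef
  have hom : ∀ {z : C} (γ γ' : Path x₀ z), Nonempty (Path.Homotopy γ γ') := by
    intro z γ γ'
    letI := Path.Homotopic.setoid x₀ z
    have hsub : Subsingleton (Path.Homotopic.Quotient x₀ z) := inferInstance
    exact Quotient.exact (@Subsingleton.elim (Path.Homotopic.Quotient x₀ z) hsub
      ⟦γ⟧ ⟦γ'⟧)
  have hΓ0 : ∀ x : C, (Γ x).extend 0 ∈ U i₀ := fun x => by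
    rw [Path.extend_zero]; exact hi₀
  refine ⟨ω, ?_, ?_⟩
  · -- local constancy
    intro i
    rw [IsLocallyConstant.iff_exists_open]
    rintro ⟨x, hx⟩
    refine ⟨Subtype.val ⁻¹' pathComponentIn (U i) x,
      ((hUo i).pathComponentIn x).preimage continuous_subtype_val,
      mem_pathComponentIn_self hx, ?_⟩
    rintro ⟨y, hyU⟩ hy
    have hjoin : JoinedIn (U i) x y := hy
    show ω i y = ω i x
    set σ : Path x y := hjoin.somePath with hσdef
    have hσ : ∀ t, σ t ∈ U i := hjoin.somePath_mem
    set τ : Path x₀ y := (Γ x).trans σ with hτdef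
    have hhalf : ∀ t ∈ Icc (0:ℝ) 1, τ.extend (t/2) = (Γ x).extend t :=
      CechAux.trans_extend_half (Γ x) σ
    have had_half : CechAux.Adapted U τ.extend 0 (1/2)
        ((c x).map fun p => (p.1, p.2/2)) := by
      have := CechAux.Adapted.half hhalf (hcx x) le_rfl le_rfl
      rwa [zero_div] at this
    have hseg2 : ∀ t ∈ Icc ((1:ℝ)/2) 1, τ.extend t ∈ U i := by
      intro t ht
      rw [CechAux.trans_extend_second (Γ x) σ t ht,
        Path.extend_apply σ ⟨by linarith [ht.1], by linarith [ht.2]⟩]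
      exact hσ _
    have had' : CechAux.Adapted U τ.extend 0 1
        (((c x).map fun p => (p.1, p.2/2)) ++ [(i, 1)]) :=
      CechAux.Adapted.append_single had_half (by norm_num) hseg2
    have hmaster := CechAux.chainVal_homotopic hUo hUcov hlc hcoc
      (hom (Γ y) τ).some hi₀ (hjoin.target_mem) (hcx y) had'
    have happ := CechAux.chainVal_append_single (ψ := ψ) (f := τ.extend) (k := i) (j := i)
      (b := 1) ((c x).map fun p => (p.1, p.2/2)) i₀ 0
    have hτ1 : τ.extend 1 = y := τ.extend_one
    have hhalfval : CechAux.chainVal ψ τ.extend i₀ 0 ((c x).map fun p => (p.1, p.2/2)) i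
        = CechAux.chainVal ψ (Γ x).extend i₀ 0 (c x) i := by
      have := CechAux.chainVal_half (ψ := ψ) (j := i) hhalf (c x) i₀ (hcx x) le_rfl le_rfl
      rwa [zero_div] at this
    have hωy : ω i y = CechAux.chainVal ψ (Γ y).extend i₀ 0 (c y) i := by
      rw [hωdef]; simp only [dif_pos hjoin.target_mem]
    have hωx : ω i x = CechAux.chainVal ψ (Γ x).extend i₀ 0 (c x) i := by
      rw [hωdef]; simp only [dif_pos hx]
    rw [hωy, hωx, hmaster, happ, hτ1, CechAux.psi_self hcoc hjoin.target_mem, mul_one,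
      hhalfval]
  · -- the coboundary identity
    intro i j x hx
    obtain ⟨hxi, hxj⟩ := hx
    have h1 : (Γ x).extend 1 = x := (Γ x).extend_one
    have hωj : ω j x = ω i x * ψ i j x := by
      rw [hωdef]
      simp only [dif_pos hxi, dif_pos hxj]
      have hxi' : (Γ x).extend 1 ∈ U i := by rw [h1]; exact hxi
      have hxj' : (Γ x).extend 1 ∈ U j := by rw [h1]; exact hxj
      have := CechAux.chainVal_right_change hcoc (f := (Γ x).extend) (b := 1)
        (j := i) (j' := j) hxi' hxj' (hcx x) (hΓ0 x)
      rw [this, h1]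
    rw [hωj, inv_mul_cancel_left]
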